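/- Let H:[N]→[M] be a random hash function from a hash family 𝓗 of size at most 2^d, let K ≤ N be an integer with K^T ≤ (δ²/(4α)) · M^T / 2^d for reals δ ∈ (0,1), α > 1, and let X be a flat K-source on [N] (uniform on a set of size K). Let X⃗ = (X_1,...,X_T) consist of T independent copies of X. Then Y⃗ = (H(X_1),...,H(X_T)) is (1−δ)-far in statistical distance from every distribution Z⃗ on [M]^T with cp(Z⃗) ≤ α/M^T. -/

import Mathlib

open Finset

/-- Theorem for hashed values only, large hash family: if
`|𝓗| ≤ 2^d`, `K^T ≤ (δ²/(4α))·M^T/2^d`, and `X⃗` consists of `T` independent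
copies of a flat `K`-source, then `Y⃗ = (H(X_1),...,H(X_T))` is `(1-δ)`-far
from every distribution `Z⃗` with `cp(Z⃗) ≤ α/M^T`. -/
theorem stmt16 {N M T : ℕ} {Hfam : Type} [Fintype Hfam] [Nonempty Hfam]
    (d : ℝ) (hcard : (Fintype.card Hfam : ℝ) ≤ 2 ^ d)
    (hash : Hfam → Fin N → Fin M)
    (δ α : ℝ) (hδ0 : 0 < δ) (hδ1 : δ < 1) (hα : 1 < α)
    (K : ℕ) (hK : 0 < K) (hKN : K ≤ N)
    (hKT : (K : ℝ) ^ T ≤ δ ^ 2 / (4 * α) * (M : ℝ) ^ T / 2 ^ d)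
    (S : Finset (Fin N)) (hS : S.card = K)
    (Z : (Fin T → Fin M) → ℝ) (hZ0 : ∀ y, 0 ≤ Z y) (hZ1 : ∑ y, Z y = 1)
    (hZcp : ∑ y, (Z y) ^ 2 ≤ α / (M : ℝ) ^ T) :
    (1 / 2 : ℝ) * ∑ y : Fin T → Fin M,
      |(1 / Fintype.card Hfam : ℝ) * ∑ hh : Hfam,
          ∏ i, (∑ x ∈ S, if hash hh x = y i then (1 / K : ℝ) else 0)
        - Z y| ≥ 1 - δ := by
  classical
  have hc : 0 < Fintype.card Hfam := Fintype.card_pos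
  have hSne : S.Nonempty := by rw [← Finset.card_pos, hS]; exact hK
  obtain ⟨x0, hx0⟩ := hSne
  have hM : 0 < M := (hash (Classical.arbitrary Hfam) x0).pos
  set c : ℕ := Fintype.card Hfam with hcdef
  set g : Hfam → Fin M → ℝ := fun hh m => ∑ x ∈ S, if hash hh x = m then (1 / K : ℝ) else 0 with hgdef
  set p : (Fin T → Fin M) → ℝ := fun y => (1 / c : ℝ) * ∑ hh, ∏ i, g hh (y i) with hpdef
  have hg0 : ∀ hh m, 0 ≤ g hh m := by
    intro hh m
    apply Finset.sum_nonneg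
    intro x _
    positivity
  have hg1 : ∀ hh, ∑ m, g hh m = 1 := by
    intro hh
    rw [hgdef]
    simp only
    rw [Finset.sum_comm]
    have : ∀ x ∈ S, (∑ m : Fin M, if hash hh x = m then (1 / K : ℝ) else 0) = 1 / K := by
      intro x _
      simp [Finset.sum_ite_eq]
    rw [Finset.sum_congr rfl this, Finset.sum_const, hS]
    rw [nsmul_eq_mul]; field_simp [Nat.cast_ne_zero.mpr hK.ne']
  have hp0 : ∀ y, 0 ≤ p y := by
    intro y
    apply mul_nonneg (by positivity)
    exact Finset.sum_nonneg fun hh _ => Finset.prod_nonneg fun i _ => hg0 hh (y i)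
  have hp1 : ∑ y, p y = 1 := by
    rw [hpdef]
    simp only
    rw [← Finset.mul_sum, Finset.sum_comm]
    have : ∀ hh : Hfam, (∑ y : Fin T → Fin M, ∏ i, g hh (y i)) = 1 := by
      intro hh
      have := Finset.sum_prod_piFinset (Finset.univ : Finset (Fin M)) (fun (i : Fin T) m => g hh m)
      rw [Fintype.piFinset_univ] at this
      rw [this]
      simp [hg1 hh]
    rw [Finset.sum_congr rfl fun hh _ => this hh, Finset.sum_const]
    have : (c : ℝ) ≠ 0 := Nat.cast_ne_zero.mpr hc.ne'
    field_simp
    simp [hcdef]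
  -- support of p
  set A : Finset (Fin T → Fin M) := Finset.univ.filter (fun y => p y ≠ 0) with hAdef
  have hAsub : A ⊆ Finset.univ.biUnion
      (fun hh : Hfam => Fintype.piFinset (fun _ : Fin T => S.image (hash hh))) := by
    intro y hy
    rw [hAdef, Finset.mem_filter] at hy
    have hpy : (∑ hh, ∏ i, g hh (y i)) ≠ 0 := by
      intro h0
      exact hy.2 (by rw [hpdef]; simp [h0])
    obtain ⟨hh, _, hhne⟩ := Finset.exists_ne_zero_of_sum_ne_zero hpy
    rw [Finset.mem_biUnion]
    refine ⟨hh, Finset.mem_univ _, ?_⟩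
    rw [Fintype.mem_piFinset]
    intro i
    have hgi : g hh (y i) ≠ 0 := by
      rw [Finset.prod_ne_zero_iff] at hhne
      exact hhne i (Finset.mem_univ i)
    obtain ⟨x, hxS, hxne⟩ := Finset.exists_ne_zero_of_sum_ne_zero hgi
    have : hash hh x = y i := by
      by_contra hne
      exact hxne (by simp [hne])
    exact Finset.mem_image.mpr ⟨x, hxS, this⟩
  have hAcard : (A.card : ℝ) ≤ (c : ℝ) * (K : ℝ) ^ T := by
    have h1 : A.card ≤ ∑ _hh : Hfam, K ^ T := by
      calc A.card ≤ _ := Finset.card_le_card hAsub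
        _ ≤ ∑ hh : Hfam, (Fintype.piFinset (fun _ : Fin T => S.image (hash hh))).card :=
          Finset.card_biUnion_le
        _ ≤ ∑ _hh : Hfam, K ^ T := by
          apply Finset.sum_le_sum
          intro hh _
          rw [Fintype.card_piFinset]
          calc ∏ _i : Fin T, (S.image (hash hh)).card
              ≤ ∏ _i : Fin T, K := by
                apply Finset.prod_le_prod (fun _ _ => Nat.zero_le _)
                intro i _
                exact hS ▸ Finset.card_image_le
            _ = K ^ T := by simp
    have : (A.card : ℝ) ≤ (c : ℝ) * (K : ℝ) ^ T := by
      have := h1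
      rw [Finset.sum_const, smul_eq_mul] at this
      exact_mod_cast this
    exact this
  have h2d : (0 : ℝ) < 2 ^ d := Real.rpow_pos_of_pos two_pos d
  have hAcard2 : (A.card : ℝ) ≤ δ ^ 2 / (4 * α) * (M : ℝ) ^ T := by
    calc (A.card : ℝ) ≤ (c : ℝ) * (K : ℝ) ^ T := hAcard
      _ ≤ 2 ^ d * (δ ^ 2 / (4 * α) * (M : ℝ) ^ T / 2 ^ d) := by
          apply mul_le_mul hcard hKT (by positivity) (le_of_lt h2d)
      _ = δ ^ 2 / (4 * α) * (M : ℝ) ^ T := by field_simp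
  -- Z(A) ≤ δ/2
  have hZA : ∑ y ∈ A, Z y ≤ δ / 2 := by
    have hMT : (0 : ℝ) < (M : ℝ) ^ T := by positivity
    have hsq : (∑ y ∈ A, Z y) ^ 2 ≤ (A.card : ℝ) * ∑ y ∈ A, (Z y) ^ 2 :=
      sq_sum_le_card_mul_sum_sq
    have hZcpA : ∑ y ∈ A, (Z y) ^ 2 ≤ α / (M : ℝ) ^ T :=
      le_trans (Finset.sum_le_sum_of_subset_of_nonneg (Finset.subset_univ A)
        (fun y _ _ => sq_nonneg _)) hZcp
    have hsq2 : (∑ y ∈ A, Z y) ^ 2 ≤ (δ / 2) ^ 2 := by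
      calc (∑ y ∈ A, Z y) ^ 2 ≤ (A.card : ℝ) * (α / (M : ℝ) ^ T) := by
            apply le_trans hsq
            exact mul_le_mul_of_nonneg_left hZcpA (Nat.cast_nonneg _)
        _ ≤ (δ ^ 2 / (4 * α) * (M : ℝ) ^ T) * (α / (M : ℝ) ^ T) := by
            apply mul_le_mul_of_nonneg_right hAcard2 (by positivity)
        _ = (δ / 2) ^ 2 := by field_simp; ring
      
    have hZAnn : 0 ≤ ∑ y ∈ A, Z y := Finset.sum_nonneg fun y _ => hZ0 y
    nlinarith [hsq2, hZAnn, hδ0]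
  -- p vanishes off A, sums to 1 on A
  have hpA : ∑ y ∈ A, p y = 1 := by
    rw [← hp1]
    apply Finset.sum_subset (Finset.subset_univ A)
    intro y _ hy
    rw [hAdef, Finset.mem_filter] at hy
    push_neg at hy
    exact hy (Finset.mem_univ y)
  have hZAc : ∑ y ∈ Aᶜ, Z y = 1 - ∑ y ∈ A, Z y := by
    have := Finset.sum_add_sum_compl A Z
    rw [hZ1] at this
    linarith
  -- main bound
  have hmain : ∑ y : Fin T → Fin M, |p y - Z y| ≥ 2 - 2 * (∑ y ∈ A, Z y) := by
    rw [← Finset.sum_add_sum_compl A (fun y => |p y - Z y|)]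
    have hA1 : ∑ y ∈ A, |p y - Z y| ≥ ∑ y ∈ A, (p y - Z y) :=
      Finset.sum_le_sum fun y _ => le_abs_self _
    have hA2 : ∑ y ∈ Aᶜ, |p y - Z y| ≥ ∑ y ∈ Aᶜ, Z y := by
      apply Finset.sum_le_sum
      intro y hy
      have hpy : p y = 0 := by
        rw [Finset.mem_compl, hAdef, Finset.mem_filter] at hy
        push_neg at hy
        exact hy (Finset.mem_univ y)
      rw [hpy, zero_sub, abs_neg, abs_of_nonneg (hZ0 y)]
    have hsum : ∑ y ∈ A, (p y - Z y) = 1 - ∑ y ∈ A, Z y := by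
      rw [Finset.sum_sub_distrib, hpA]
    linarith
  linarith
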